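/- (Gap property of the Shapley value for the drastic measure.) Let D be a finite set and f ∈ D. If no g ∈ D\{f} satisfies C(f,g), then Shapley(D, I_d, f) = 0. If some g ∈ D\{f} satisfies C(f,g), then Shapley(D, I_d, f) ≥ 1/(|D| · (|D|−1)). In particular, Shapley(D, I_d, f) is either zero or at least 1/(|D|·(|D|−1)). -/

import Mathlib

open scoped BigOperators Classical

variable {α : Type*} [DecidableEq α]

/-- The Shapley value of `f` in the cooperative game `v` over the set of players `D`. -/
noncomputable def Shapley (D : Finset α) (v : Finset α → ℝ) (f : α) : ℝ :=
  ∑ B ∈ (D \ {f}).powerset,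
    ((B.card.factorial * (D.card - B.card - 1).factorial : ℕ) : ℝ) / (D.card.factorial : ℝ) *
      (v (B ∪ {f}) - v B)

/-- A finite set `E` is consistent if it contains no two distinct conflicting elements. -/
def Consistent (C : α → α → Prop) (E : Finset α) : Prop :=
  ∀ g ∈ E, ∀ h ∈ E, g ≠ h → ¬ C g h

/-- The drastic inconsistency measure: `1` if the set is inconsistent, `0` otherwise. -/
noncomputable def Idrastic (C : α → α → Prop) (E : Finset α) : ℝ :=
  if Consistent C E then 0 else 1

/-- Gap property of the Shapley value for the drastic measure: it is `0` when no
element of `D \ {f}` conflicts with `f`, and otherwise at least `1/(|D|·(|D|−1))`. -/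
theorem shapley_drastic_gap (C : α → α → Prop) (hsymm : Symmetric C)
    (D : Finset α) (f : α) (hf : f ∈ D) :
    ((∀ g ∈ D \ {f}, ¬ C f g) → Shapley D (Idrastic C) f = 0) ∧
      ((∃ g ∈ D \ {f}, C f g) →
        1 / ((D.card : ℝ) * ((D.card : ℝ) - 1)) ≤ Shapley D (Idrastic C) f) := by
  have hmono : ∀ B E : Finset α, B ⊆ E → Consistent C E → Consistent C B := by
    intro B E hBE hE g hg h hh hne
    exact hE g (hBE hg) h (hBE hh) hne
  have hle : ∀ B : Finset α, Idrastic C B ≤ Idrastic C (B ∪ {f}) := by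
    intro B
    unfold Idrastic
    by_cases hc : Consistent C (B ∪ {f})
    · rw [if_pos hc, if_pos (hmono B _ Finset.subset_union_left hc)]
    · rw [if_neg hc]
      split <;> norm_num
  constructor
  · intro h
    apply Finset.sum_eq_zero
    intro B hB
    rw [Finset.mem_powerset] at hB
    suffices hs : Idrastic C (B ∪ {f}) = Idrastic C B by rw [hs]; ring
    unfold Idrastic
    by_cases hc : Consistent C B
    · rw [if_pos hc, if_pos]
      intro g hg h' hh' hne hC
      rw [Finset.mem_union, Finset.mem_singleton] at hg hh'
      rcases hg with hg | rfl <;> rcases hh' with hh' | rfl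
      · exact hc g hg h' hh' hne hC
      · exact h g (hB hg) (hsymm hC)
      · exact h h' (hB hh') hC
      · exact hne rfl
    · rw [if_neg hc, if_neg (fun hcon => hc (hmono B _ Finset.subset_union_left hcon))]
  · rintro ⟨g, hg, hCfg⟩
    have hgD := Finset.mem_sdiff.mp hg
    have hgf : g ≠ f := by simpa using hgD.2
    have hn2 : 2 ≤ D.card := Finset.one_lt_card.mpr ⟨f, hf, g, hgD.1, hgf.symm⟩
    have hsub : {g} ∈ (D \ {f}).powerset := by
      rw [Finset.mem_powerset, Finset.singleton_subset_iff]; exact hg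
    have hkey : (1 : ℝ) / ((D.card : ℝ) * ((D.card : ℝ) - 1)) ≤
        ((({g} : Finset α).card.factorial *
          (D.card - ({g} : Finset α).card - 1).factorial : ℕ) : ℝ) / (D.card.factorial : ℝ) *
          (Idrastic C ({g} ∪ {f}) - Idrastic C {g}) := by
      have h1 : Idrastic C ({g} : Finset α) = 0 := by
        rw [Idrastic, if_pos]
        intro a ha b hb hne
        rw [Finset.mem_singleton] at ha hb
        exact absurd (ha.trans hb.symm) hne
      have h2 : Idrastic C ({g} ∪ {f} : Finset α) = 1 := by
        rw [Idrastic, if_neg]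
        intro hcon
        exact hcon f (by simp) g (by simp) hgf.symm (hsymm (hsymm hCfg))
      rw [h1, h2, Finset.card_singleton]
      have hfact : (D.card.factorial : ℝ) =
          (D.card : ℝ) * ((D.card : ℝ) - 1) * ((D.card - 1 - 1).factorial : ℝ) := by
        obtain ⟨m, hm⟩ : ∃ m, D.card = m + 2 := ⟨D.card - 2, by omega⟩
        rw [hm]
        simp [Nat.factorial_succ]
        push_cast
        ring
      have hpos : (0 : ℝ) < (D.card : ℝ) * ((D.card : ℝ) - 1) := by
        have : (2 : ℝ) ≤ (D.card : ℝ) := by exact_mod_cast hn2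
        nlinarith
      have hfpos : (0 : ℝ) < ((D.card - 1 - 1).factorial : ℝ) := by
        exact_mod_cast Nat.factorial_pos _
      rw [Nat.factorial_one, one_mul, hfact, sub_zero, mul_one]
      apply le_of_eq
      rw [eq_div_iff (by positivity)]
      field_simp
      have hc1 : (0 : ℝ) < (D.card : ℝ) - 1 := by
        have : (2 : ℝ) ≤ (D.card : ℝ) := by exact_mod_cast hn2
        linarith
      exact div_self (ne_of_gt hc1)
    calc (1 : ℝ) / ((D.card : ℝ) * ((D.card : ℝ) - 1)) ≤ _ := hkey
      _ ≤ Shapley D (Idrastic C) f := by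
        apply Finset.single_le_sum (f := fun B =>
          ((B.card.factorial * (D.card - B.card - 1).factorial : ℕ) : ℝ) /
            (D.card.factorial : ℝ) * (Idrastic C (B ∪ {f}) - Idrastic C B)) _ hsub
        intro B _
        apply mul_nonneg
        · positivity
        · linarith [hle B]
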